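/- Let γ < 0 and r ∈ (1/2, 1). For j ≥ 1, define for a probability density F on (ℝ³)^j the weighted Fisher information I_γ(F) := j^{-1} ∫ |∇_γ F|²/F where ∇_γF = (⟨v₁⟩^{γ/2}∇_{v₁}F, …, ⟨v_j⟩^{γ/2}∇_{v_j}F) and ⟨v⟩ = (1+|v|²)^{1/2}, and the fractional Fisher information I^r(F) := j^{-1} ∫ Σᵢ |∇_{vᵢ} log F|^{2r} F. Then for any symmetric probability measure F on (ℝ³)^j: I^r(F) ≤ C_q (I_γ(F))^r (1 + m_q(F))^{1−r} with q := |γ| r / (1 − r), where m_q(F) = ∫ |v₁|^q F. -/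

import Mathlib

open MeasureTheory

noncomputable section

/-- Partial gradient of `F : (ℝ³)^j → ℝ` with respect to the `i`-th coordinate block. -/
def pgrad {j : ℕ} (F : (Fin j → EuclideanSpace ℝ (Fin 3)) → ℝ)
    (i : Fin j) (V : Fin j → EuclideanSpace ℝ (Fin 3)) : EuclideanSpace ℝ (Fin 3) :=
  gradient (fun w => F (Function.update V i w)) (V i)

theorem st16_rpow_id (γ r q t a c : ℝ)
    (hq : q * (1 - r) = -(γ * r)) (ht : 0 < t) (ha : 0 ≤ a) (hc : 0 < c) :
    a ^ (2 * r) / c ^ (2 * r - 1)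
      = (t ^ (γ / 2) * a ^ 2 / c) ^ r * (t ^ (q / 2) * c) ^ (1 - r) := by
  have h2 : (a:ℝ) ^ 2 = a ^ (2:ℝ) := by
    rw [show ((2:ℝ)) = ((2:ℕ):ℝ) by norm_num, Real.rpow_natCast]
  rw [Real.div_rpow (by positivity) hc.le, Real.mul_rpow (by positivity) (by positivity),
    Real.mul_rpow (by positivity) hc.le, h2,
    ← Real.rpow_mul ht.le, ← Real.rpow_mul ha, ← Real.rpow_mul ht.le]
  have hts : t ^ (γ / 2 * r) * t ^ (q / 2 * (1 - r)) = 1 := by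
    rw [← Real.rpow_add ht]
    rw [show γ / 2 * r + q / 2 * (1 - r) = 0 by nlinarith, Real.rpow_zero]
  have hcs : c ^ (1 - r) / c ^ r = (c ^ (2 * r - 1))⁻¹ := by
    rw [← Real.rpow_sub hc, ← Real.rpow_neg hc.le]
    ring_nf
  calc a ^ (2 * r) / c ^ (2 * r - 1)
      = (t ^ (γ / 2 * r) * t ^ (q / 2 * (1 - r))) * a ^ (2 * r) * (c ^ (1 - r) / c ^ r) := by
        rw [hts, hcs]; ring
    _ = t ^ (γ / 2 * r) * a ^ (2 * r) / c ^ r * (t ^ (q / 2 * (1 - r)) * c ^ (1 - r)) := by ring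

theorem st16_disc_holder {ι : Type*} (s : Finset ι) (f g : ι → ℝ) (r : ℝ)
    (hr1 : (0:ℝ) < r) (hr2 : r < 1)
    (hf : ∀ i, 0 ≤ f i) (hg : ∀ i, 0 ≤ g i) :
    ∑ i ∈ s, (f i) ^ r * (g i) ^ (1 - r)
      ≤ (∑ i ∈ s, f i) ^ r * (∑ i ∈ s, g i) ^ (1 - r) := by
  have hpq : (1/r).HolderConjugate (1/(1-r)) := by
    rw [Real.holderConjugate_iff]; constructor
    · rw [lt_div_iff₀ hr1]; linarith
    · simp only [one_div, inv_inv]; ring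
  have h := Real.inner_le_Lp_mul_Lq s (fun i => (f i) ^ r) (fun i => (g i) ^ (1 - r)) hpq
  simp only [one_div_one_div] at h
  refine h.trans_eq ?_
  congr 1
  · congr 1
    refine Finset.sum_congr rfl fun i _ => ?_
    rw [abs_of_nonneg (Real.rpow_nonneg (hf i) r), ← Real.rpow_mul (hf i),
      mul_one_div, div_self hr1.ne', Real.rpow_one]
  · congr 1
    refine Finset.sum_congr rfl fun i _ => ?_
    rw [abs_of_nonneg (Real.rpow_nonneg (hg i) _), ← Real.rpow_mul (hg i),
      mul_one_div, div_self (by linarith : 1 - r ≠ 0), Real.rpow_one]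

theorem st16_perm_preserve (j : ℕ) (π : Equiv.Perm (Fin j)) :
    MeasurePreserving (fun V : Fin j → EuclideanSpace ℝ (Fin 3) => V ∘ π) volume volume := by
  have h := measurePreserving_arrowCongr'
      (fun _ : Fin j => (volume : Measure (EuclideanSpace ℝ (Fin 3))))
      (fun _ : Fin j => volume) π.symm (MeasurableEquiv.refl _)
      (fun i => MeasurePreserving.id volume)
  rw [volume_pi]
  convert h using 1 <;> rfl

theorem st16_perm_integral (j : ℕ) (π : Equiv.Perm (Fin j))
    (g : (Fin j → EuclideanSpace ℝ (Fin 3)) → ℝ) :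
    ∫ V, g (V ∘ π) = ∫ V, g V := by
  have he : MeasurableEmbedding (fun V : Fin j → EuclideanSpace ℝ (Fin 3) => V ∘ π) :=
    (MeasurableEquiv.arrowCongr' π.symm
      (MeasurableEquiv.refl (EuclideanSpace ℝ (Fin 3)))).measurableEmbedding
  exact (st16_perm_preserve j π).integral_comp he g

theorem st16_perm_integrable (j : ℕ) (π : Equiv.Perm (Fin j))
    (g : (Fin j → EuclideanSpace ℝ (Fin 3)) → ℝ)
    (hg : Integrable g) : Integrable (fun V => g (V ∘ π)) := by
  have he : MeasurableEmbedding (fun V : Fin j → EuclideanSpace ℝ (Fin 3) => V ∘ π) :=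
    (MeasurableEquiv.arrowCongr' π.symm
      (MeasurableEquiv.refl (EuclideanSpace ℝ (Fin 3)))).measurableEmbedding
  exact ((st16_perm_preserve j π).integrable_comp_emb he).mpr hg

theorem st16_wbound (q x : ℝ) (hq : 0 ≤ q) (hx : 0 ≤ x) :
    (1 + x ^ 2) ^ (q / 2) ≤ 2 ^ (q / 2) * (1 + x ^ q) := by
  have hxq : 0 ≤ x ^ q := Real.rpow_nonneg hx q
  rcases le_total x 1 with hx1 | hx1
  · have h1 : (1 + x ^ 2 : ℝ) ≤ 2 := by nlinarith
    have h2 : (1 + x ^ 2 : ℝ) ^ (q / 2) ≤ 2 ^ (q / 2) :=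
      Real.rpow_le_rpow (by positivity) h1 (by positivity)
    nlinarith [Real.rpow_nonneg (show (0:ℝ) ≤ 2 by norm_num) (q/2), h2]
  · have h1 : (1 + x ^ 2 : ℝ) ≤ 2 * x ^ 2 := by nlinarith
    have h2 : (1 + x ^ 2 : ℝ) ^ (q / 2) ≤ (2 * x ^ 2) ^ (q / 2) :=
      Real.rpow_le_rpow (by positivity) h1 (by positivity)
    have h3 : (2 * x ^ 2 : ℝ) ^ (q / 2) = 2 ^ (q / 2) * x ^ q := by
      rw [Real.mul_rpow (by norm_num) (by positivity),
        show (x:ℝ) ^ 2 = x ^ (2:ℝ) by rw [show ((2:ℝ)) = ((2:ℕ):ℝ) by norm_num,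
          Real.rpow_natCast], ← Real.rpow_mul hx, show (2:ℝ) * (q/2) = q by ring]
    have h4 : (2:ℝ) ^ (q / 2) * x ^ q ≤ 2 ^ (q / 2) * (1 + x ^ q) := by
      have : (0:ℝ) ≤ (2:ℝ) ^ (q/2) := by positivity
      nlinarith
    linarith [h2.trans_eq h3]

set_option maxHeartbeats 1000000 in
/-- for `γ < 0` and `r ∈ (1/2,1)`, with `q = |γ| r/(1−r)`, there is a
constant `C_q` such that for every `j ≥ 1` and every (smooth, positive) symmetric
probability density `F` on `(ℝ³)^j`,
`I^r(F) ≤ C_q (I_γ(F))^r (1 + m_q(F))^{1−r}`, where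
`I^r(F) = j⁻¹ ∫ Σᵢ |∇_{vᵢ} log F|^{2r} F`, `I_γ(F) = j⁻¹ ∫ Σᵢ ⟨vᵢ⟩^γ |∇_{vᵢ} log F|² F`
and `m_q(F) = ∫ |v₁|^q F`. -/
theorem statement16 (γ r : ℝ) (hγ : γ < 0) (hr : r ∈ Set.Ioo (1 / 2 : ℝ) 1) :
    ∃ C : ℝ, 0 < C ∧ ∀ (j : ℕ) (hj : 1 ≤ j)
      (F : (Fin j → EuclideanSpace ℝ (Fin 3)) → ℝ),
      (∀ V, 0 < F V) → Differentiable ℝ F → Integrable F → (∫ V, F V) = 1 →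
      (∀ (π : Equiv.Perm (Fin j)) V, F (V ∘ π) = F V) →
      Integrable (fun V =>
        (∑ i, (1 + ‖V i‖ ^ 2) ^ (γ / 2) * ‖pgrad F i V‖ ^ 2) / F V) →
      Integrable (fun V => ∑ i, ‖pgrad F i V‖ ^ (2 * r) / F V ^ (2 * r - 1)) →
      Integrable (fun V => ‖V ⟨0, hj⟩‖ ^ (|γ| * r / (1 - r)) * F V) →
      (j : ℝ)⁻¹ * (∫ V, ∑ i, ‖pgrad F i V‖ ^ (2 * r) / F V ^ (2 * r - 1)) ≤
        C * ((j : ℝ)⁻¹ *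
            ∫ V, (∑ i, (1 + ‖V i‖ ^ 2) ^ (γ / 2) * ‖pgrad F i V‖ ^ 2) / F V) ^ r *
          (1 + ∫ V, ‖V ⟨0, hj⟩‖ ^ (|γ| * r / (1 - r)) * F V) ^ (1 - r) := by
  obtain ⟨hr1, hr2⟩ := hr
  have hr0 : (0:ℝ) < r := by linarith
  have h1r : (0:ℝ) < 1 - r := by linarith
  set q : ℝ := |γ| * r / (1 - r) with hqdef
  have hq0 : 0 < q := div_pos (mul_pos (abs_pos.mpr hγ.ne) hr0) h1r
  have hqγ : q * (1 - r) = -(γ * r) := by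
    rw [hqdef, div_mul_cancel₀ _ h1r.ne', abs_of_neg hγ]; ring
  refine ⟨2 ^ (q/2), Real.rpow_pos_of_pos two_pos _, ?_⟩
  intro j hj F hF hFd hFi hF1 hsym hAint hHint hmint
  set i₀ : Fin j := ⟨0, hj⟩
  -- notation
  set H : (Fin j → EuclideanSpace ℝ (Fin 3)) → ℝ :=
    fun V => ∑ i, ‖pgrad F i V‖ ^ (2 * r) / F V ^ (2 * r - 1) with hHdef
  set A : (Fin j → EuclideanSpace ℝ (Fin 3)) → ℝ :=
    fun V => (∑ i, (1 + ‖V i‖ ^ 2) ^ (γ / 2) * ‖pgrad F i V‖ ^ 2) / F V with hAdef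
  set B : (Fin j → EuclideanSpace ℝ (Fin 3)) → ℝ :=
    fun V => ∑ i, (1 + ‖V i‖ ^ 2) ^ (q / 2) * F V with hBdef
  set g0 : (Fin j → EuclideanSpace ℝ (Fin 3)) → ℝ :=
    fun V => (1 + ‖V i₀‖ ^ 2) ^ (q / 2) * F V with hg0def
  -- continuity / integrability of g0
  have hg0cont : Continuous g0 := by
    apply Continuous.mul ?_ hFd.continuous
    apply Continuous.rpow_const
    · exact continuous_const.add ((continuous_apply i₀).norm.pow 2)
    · intro x; right; positivity
  have hg0nn : ∀ V, 0 ≤ g0 V := fun V => mul_nonneg (by positivity) (hF V).le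
  have hg0int : Integrable g0 := by
    refine Integrable.mono' (((hFi.add hmint).const_mul ((2:ℝ) ^ (q/2))))
      hg0cont.aestronglyMeasurable (ae_of_all _ fun V => ?_)
    rw [Real.norm_eq_abs, abs_of_nonneg (hg0nn V)]
    have hb := st16_wbound q ‖V i₀‖ hq0.le (norm_nonneg _)
    calc g0 V ≤ (2 ^ (q/2) * (1 + ‖V i₀‖ ^ q)) * F V :=
          mul_le_mul_of_nonneg_right hb (hF V).le
      _ = 2 ^ (q/2) * (F V + ‖V i₀‖ ^ q * F V) := by ring
  -- integrability of each g_i and of B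
  have hgi : ∀ i : Fin j, (fun V : Fin j → EuclideanSpace ℝ (Fin 3) =>
      (1 + ‖V i‖ ^ 2) ^ (q / 2) * F V) = fun V => g0 (V ∘ Equiv.swap i₀ i) := by
    intro i
    funext V
    rw [hg0def]
    simp only [Function.comp_apply, Equiv.swap_apply_left]
    rw [hsym (Equiv.swap i₀ i) V]
  have hgiint : ∀ i : Fin j, Integrable (fun V : Fin j → EuclideanSpace ℝ (Fin 3) =>
      (1 + ‖V i‖ ^ 2) ^ (q / 2) * F V) := by
    intro i; rw [hgi i]; exact st16_perm_integrable j _ g0 hg0int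
  have hBint : Integrable B := by
    rw [hBdef]
    exact integrable_finset_sum _ fun i _ => hgiint i
  have hBnn : ∀ V, 0 ≤ B V := fun V =>
    Finset.sum_nonneg fun i _ => mul_nonneg (by positivity) (hF V).le
  have hAnn : ∀ V, 0 ≤ A V := fun V =>
    div_nonneg (Finset.sum_nonneg fun i _ => by positivity) (hF V).le
  have hHnn : ∀ V, 0 ≤ H V := fun V =>
    Finset.sum_nonneg fun i _ => div_nonneg (Real.rpow_nonneg (norm_nonneg _) _)
      (Real.rpow_nonneg (hF V).le _)
  -- value of ∫ B
  have hBval : ∫ V, B V = (j : ℝ) * ∫ V, g0 V := by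
    rw [hBdef, integral_finset_sum _ fun i _ => hgiint i]
    have : ∀ i : Fin j, ∫ V, (1 + ‖V i‖ ^ 2) ^ (q / 2) * F V = ∫ V, g0 V := by
      intro i; rw [hgi i]; exact st16_perm_integral j _ g0
    rw [Finset.sum_congr rfl fun i _ => this i]
    simp [Finset.card_univ, mul_comm]
  have hg0val : ∫ V, g0 V ≤ 2 ^ (q/2) * (1 + ∫ V, ‖V i₀‖ ^ q * F V) := by
    have hle : ∀ V, g0 V ≤ 2 ^ (q/2) * (F V + ‖V i₀‖ ^ q * F V) := by
      intro V
      have hb := st16_wbound q ‖V i₀‖ hq0.le (norm_nonneg _)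
      calc g0 V ≤ (2 ^ (q/2) * (1 + ‖V i₀‖ ^ q)) * F V :=
            mul_le_mul_of_nonneg_right hb (hF V).le
        _ = 2 ^ (q/2) * (F V + ‖V i₀‖ ^ q * F V) := by ring
    calc ∫ V, g0 V ≤ ∫ V, 2 ^ (q/2) * (F V + ‖V i₀‖ ^ q * F V) :=
          integral_mono hg0int (((hFi.add hmint).const_mul _)) hle
      _ = 2 ^ (q/2) * (1 + ∫ V, ‖V i₀‖ ^ q * F V) := by
          rw [integral_const_mul, integral_add hFi hmint, hF1]
  -- pointwise Hölder
  have step1 : ∀ V, H V ≤ (A V) ^ r * (B V) ^ (1 - r) := by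
    intro V
    have hid : ∀ i : Fin j, ‖pgrad F i V‖ ^ (2 * r) / F V ^ (2 * r - 1)
        = ((1 + ‖V i‖ ^ 2) ^ (γ / 2) * ‖pgrad F i V‖ ^ 2 / F V) ^ r
          * ((1 + ‖V i‖ ^ 2) ^ (q / 2) * F V) ^ (1 - r) := by
      intro i
      exact st16_rpow_id γ r q (1 + ‖V i‖ ^ 2) ‖pgrad F i V‖ (F V) hqγ (by positivity)
        (norm_nonneg _) (hF V)
    calc H V = ∑ i, ((1 + ‖V i‖ ^ 2) ^ (γ / 2) * ‖pgrad F i V‖ ^ 2 / F V) ^ r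
          * ((1 + ‖V i‖ ^ 2) ^ (q / 2) * F V) ^ (1 - r) :=
          Finset.sum_congr rfl fun i _ => hid i
      _ ≤ (∑ i, (1 + ‖V i‖ ^ 2) ^ (γ / 2) * ‖pgrad F i V‖ ^ 2 / F V) ^ r
          * (∑ i, (1 + ‖V i‖ ^ 2) ^ (q / 2) * F V) ^ (1 - r) :=
          st16_disc_holder Finset.univ _ _ r hr0 hr2
            (fun i => div_nonneg (by positivity) (hF V).le)
            (fun i => mul_nonneg (by positivity) (hF V).le)
      _ = (A V) ^ r * (B V) ^ (1 - r) := by rw [hAdef, ← Finset.sum_div]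
  -- integral Hölder
  have step2 : ∫ V, H V ≤ (∫ V, A V) ^ r * (∫ V, B V) ^ (1 - r) := by
    have hpq : (1/r).HolderConjugate (1/(1-r)) := by
      rw [Real.holderConjugate_iff]; constructor
      · rw [lt_div_iff₀ hr0]; linarith
      · simp only [one_div, inv_inv]; ring
    have hAm : AEMeasurable (fun V => ENNReal.ofReal (A V)) volume :=
      hAint.aemeasurable.ennreal_ofReal
    have hBm : AEMeasurable (fun V => ENNReal.ofReal (B V)) volume :=
      hBint.aemeasurable.ennreal_ofReal
    have key := ENNReal.lintegral_mul_le_Lp_mul_Lq volume hpq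
      (hAm.pow_const r) (hBm.pow_const (1 - r))
    have hsimpf : ∀ V, (ENNReal.ofReal (A V) ^ r) ^ (1/r) = ENNReal.ofReal (A V) := by
      intro V
      rw [← ENNReal.rpow_mul, mul_one_div, div_self hr0.ne', ENNReal.rpow_one]
    have hsimpg : ∀ V, (ENNReal.ofReal (B V) ^ (1-r)) ^ (1/(1-r)) = ENNReal.ofReal (B V) := by
      intro V
      rw [← ENNReal.rpow_mul, mul_one_div, div_self h1r.ne', ENNReal.rpow_one]
    simp only [Pi.mul_apply, one_div_one_div] at key
    rw [lintegral_congr hsimpf, lintegral_congr hsimpg] at key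
    have h1 : ENNReal.ofReal (∫ V, H V) ≤
        (∫⁻ V, ENNReal.ofReal (A V)) ^ r * (∫⁻ V, ENNReal.ofReal (B V)) ^ (1 - r) := by
      rw [ofReal_integral_eq_lintegral_ofReal hHint (ae_of_all _ hHnn)]
      refine le_trans (lintegral_mono fun V => ?_) key
      rw [ENNReal.ofReal_rpow_of_nonneg (hAnn V) hr0.le,
        ENNReal.ofReal_rpow_of_nonneg (hBnn V) h1r.le,
        ← ENNReal.ofReal_mul (Real.rpow_nonneg (hAnn V) r)]
      exact ENNReal.ofReal_le_ofReal (step1 V)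
    rw [← ofReal_integral_eq_lintegral_ofReal hAint (ae_of_all _ hAnn),
      ← ofReal_integral_eq_lintegral_ofReal hBint (ae_of_all _ hBnn),
      ENNReal.ofReal_rpow_of_nonneg (integral_nonneg hAnn) hr0.le,
      ENNReal.ofReal_rpow_of_nonneg (integral_nonneg hBnn) h1r.le,
      ← ENNReal.ofReal_mul (Real.rpow_nonneg (integral_nonneg hAnn) r)] at h1
    exact (ENNReal.ofReal_le_ofReal_iff
      (mul_nonneg (Real.rpow_nonneg (integral_nonneg hAnn) r)
        (Real.rpow_nonneg (integral_nonneg hBnn) _))).mp h1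
  -- final arithmetic
  have hj0 : (0:ℝ) < (j:ℝ) := by exact_mod_cast hj
  set IA : ℝ := ∫ V, A V with hIAdef
  set M : ℝ := ∫ V, ‖V i₀‖ ^ q * F V with hMdef
  have hIAnn : 0 ≤ IA := integral_nonneg hAnn
  have hMnn : 0 ≤ M := by
    apply integral_nonneg
    intro V
    exact mul_nonneg (by positivity) (hF V).le
  have hBle : ∫ V, B V ≤ (j:ℝ) * (2 ^ (q/2) * (1 + M)) := by
    rw [hBval]
    exact mul_le_mul_of_nonneg_left hg0val hj0.le
  have hBInn : 0 ≤ ∫ V, B V := integral_nonneg hBnn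
  have hjj : (j:ℝ)⁻¹ * (j:ℝ) ^ (1-r) = ((j:ℝ)⁻¹) ^ r := by
    rw [Real.inv_rpow hj0.le, ← Real.rpow_neg hj0.le, ← Real.rpow_neg_one (j:ℝ),
      ← Real.rpow_add hj0, show (-1) + (1 - r) = -r by ring]
  have h2q1 : (1:ℝ) ≤ 2 ^ (q/2) := by
    rw [show (1:ℝ) = (2:ℝ) ^ (0:ℝ) by simp]
    exact Real.rpow_le_rpow_of_exponent_le one_le_two (by positivity)
  have hC : ((2:ℝ) ^ (q/2)) ^ (1-r) ≤ 2 ^ (q/2) := by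
    calc ((2:ℝ) ^ (q/2)) ^ (1-r) ≤ ((2:ℝ) ^ (q/2)) ^ (1:ℝ) :=
          Real.rpow_le_rpow_of_exponent_le h2q1 (by linarith)
      _ = 2 ^ (q/2) := Real.rpow_one _
  calc (j:ℝ)⁻¹ * ∫ V, H V ≤ (j:ℝ)⁻¹ * (IA ^ r * (∫ V, B V) ^ (1 - r)) :=
        mul_le_mul_of_nonneg_left step2 (by positivity)
    _ ≤ (j:ℝ)⁻¹ * (IA ^ r * ((j:ℝ) * (2 ^ (q/2) * (1 + M))) ^ (1 - r)) := by
        have := Real.rpow_le_rpow hBInn hBle h1r.le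
        have h0 : (0:ℝ) ≤ IA ^ r := Real.rpow_nonneg hIAnn r
        have h1 : (0:ℝ) ≤ (j:ℝ)⁻¹ := by positivity
        nlinarith [mul_le_mul_of_nonneg_left this h0]
    _ = ((2:ℝ) ^ (q/2)) ^ (1-r) * (((j:ℝ)⁻¹) ^ r * IA ^ r) * (1 + M) ^ (1 - r) := by
        rw [Real.mul_rpow hj0.le (by positivity),
          Real.mul_rpow (by positivity) (by positivity), ← hjj]
        ring
    _ ≤ 2 ^ (q/2) * (((j:ℝ)⁻¹) ^ r * IA ^ r) * (1 + M) ^ (1 - r) := by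
        have h0 : (0:ℝ) ≤ ((j:ℝ)⁻¹) ^ r * IA ^ r := by positivity
        have h1 : (0:ℝ) ≤ (1 + M) ^ (1-r) := by positivity
        exact mul_le_mul_of_nonneg_right (mul_le_mul_of_nonneg_right hC h0) h1
    _ = 2 ^ (q/2) * ((j:ℝ)⁻¹ * IA) ^ r * (1 + M) ^ (1 - r) := by
        rw [Real.mul_rpow (by positivity) hIAnn]
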